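/- Proposition 2 (grouping effect of LES): Assume the weights satisfy w_k > 0 for all k and the columns of X have unit Euclidean norm, and set ρ_{ki,kj} = X_{ki}^T X_{kj}. Let β̂ be any minimizer of the LES objective Q. If β̂_{ki} · β̂_{kj} > 0 for two indices i, j in group k, then |β̂_{ki} − β̂_{kj}| ≤ C · √(2(1 − ρ_{ki,kj})), where C = (1/(nλα²w_k)) · √(‖y‖₂² + 2nλ Σ_{l=1}^K w_l log p_l) · exp( ‖y‖₂²/(2nλw_k) + Σ_{l=1}^K (w_l/w_k) log p_l ). -/

import Mathlib

private lemma abs_sub_le_abs_exp_sub_exp {x y : ℝ} (hx : 0 ≤ x) (hy : 0 ≤ y) :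
    |x - y| ≤ |Real.exp x - Real.exp y| := by
  wlog h : y ≤ x generalizing x y
  · rw [abs_sub_comm, abs_sub_comm (Real.exp x)]; exact this hy hx (le_of_not_ge h)
  rw [abs_of_nonneg (sub_nonneg.2 h), abs_of_nonneg (sub_nonneg.2 (Real.exp_le_exp.2 h))]
  have he : Real.exp x = Real.exp y * Real.exp (x - y) := by rw [← Real.exp_add]; ring_nf
  nlinarith [Real.add_one_le_exp (x - y), Real.one_le_exp hy, Real.exp_pos (x - y)]


set_option maxHeartbeats 1000000

/-- **Proposition 2: the grouping effect of the LES penalty.**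
Assume all weights are positive and the columns of `X` have unit Euclidean
norm, and set `ρ = X kiᵀ X kj`.  If `β̂` is any minimizer of the LES objective
`Q` and `β̂ ki * β̂ kj > 0` for two indices `i j` in group `k`, then
`|β̂ ki - β̂ kj| ≤ C * √(2 (1 - ρ))` with the constant `C` given in the paper. -/
theorem les_grouping_effect (n K : ℕ) (hn : 0 < n) (hK : 0 < K)
    (p : Fin K → ℕ) (hp : ∀ k, 1 ≤ p k)
    (X : Fin n → (Σ k : Fin K, Fin (p k)) → ℝ) (y : Fin n → ℝ)
    (lam α : ℝ) (hlam : 0 < lam) (hα : 0 < α)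
    (w : Fin K → ℝ) (hw : ∀ k, 0 < w k)
    (hcol : ∀ j : Σ k : Fin K, Fin (p k), ∑ i : Fin n, (X i j) ^ 2 = 1)
    (βh : (Σ k : Fin K, Fin (p k)) → ℝ)
    (hmin : IsMinOn
      (fun β : (Σ k : Fin K, Fin (p k)) → ℝ =>
        (1 / (2 * (n : ℝ))) * ∑ i : Fin n, (y i - ∑ j : Σ k : Fin K, Fin (p k), X i j * β j) ^ 2
          + lam * ∑ k : Fin K, w k * Real.log (∑ j : Fin (p k), Real.exp (α * |β ⟨k, j⟩|)))
      Set.univ βh)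
    (k : Fin K) (i j : Fin (p k))
    (hsign : 0 < βh ⟨k, i⟩ * βh ⟨k, j⟩) :
    |βh ⟨k, i⟩ - βh ⟨k, j⟩| ≤
      ((1 / ((n : ℝ) * lam * α ^ 2 * w k)) *
        Real.sqrt ((∑ i' : Fin n, (y i') ^ 2) +
          2 * (n : ℝ) * lam * ∑ l : Fin K, w l * Real.log (p l)) *
        Real.exp ((∑ i' : Fin n, (y i') ^ 2) / (2 * (n : ℝ) * lam * w k) +
          ∑ l : Fin K, (w l / w k) * Real.log (p l))) *
      Real.sqrt (2 * (1 - ∑ i' : Fin n, X i' ⟨k, i⟩ * X i' ⟨k, j⟩)) := by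
  classical
  have hn' : (0:ℝ) < n := by exact_mod_cast hn
  obtain ⟨Qf, hQf⟩ : ∃ Qf : ((Σ k : Fin K, Fin (p k)) → ℝ) → ℝ, Qf = fun β =>
        (1 / (2 * (n : ℝ))) * ∑ i : Fin n, (y i - ∑ j : Σ k : Fin K, Fin (p k), X i j * β j) ^ 2
          + lam * ∑ k : Fin K, w k * Real.log (∑ j : Fin (p k), Real.exp (α * |β ⟨k, j⟩|)) :=
    ⟨_, rfl⟩
  rw [← hQf] at hmin
  have hQ : ∀ β, Qf βh ≤ Qf β := fun β => isMinOn_iff.mp hmin β (Set.mem_univ β)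
  obtain ⟨r, hrdef⟩ : ∃ r : Fin n → ℝ,
      r = fun a => y a - ∑ j : (Σ k : Fin K, Fin (p k)), X a j * βh j := ⟨_, rfl⟩
  obtain ⟨S, hSdef⟩ : ∃ S : Fin K → ℝ,
      S = fun l => ∑ j : Fin (p l), Real.exp (α * |βh ⟨l, j⟩|) := ⟨_, rfl⟩
  have hSpos : ∀ l, 0 < S l := fun l => hSdef ▸
    Finset.sum_pos (fun _ _ => Real.exp_pos _) ⟨⟨0, hp l⟩, Finset.mem_univ _⟩
  have hS1 : ∀ l, 1 ≤ S l := by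
    intro l
    rw [hSdef]
    calc (1:ℝ) ≤ Real.exp (α * |βh ⟨l, ⟨0, hp l⟩⟩|) := Real.one_le_exp (by positivity)
    _ ≤ _ := Finset.single_le_sum (f := fun j : Fin (p l) => Real.exp (α * |βh ⟨l, j⟩|))
        (fun _ _ => (Real.exp_pos _).le) (Finset.mem_univ _)
  -- stationarity condition
  have stat : ∀ c : Fin (p k), βh ⟨k, c⟩ ≠ 0 →
      lam * w k * (α * (SignType.sign (βh ⟨k, c⟩) : ℝ) * Real.exp (α * |βh ⟨k, c⟩|)) / S k
        = (1 / (n : ℝ)) * ∑ a : Fin n, X a ⟨k, c⟩ * r a := by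
    intro c hc
    set c' : (Σ k : Fin K, Fin (p k)) := ⟨k, c⟩ with hc'
    set A : Fin n → ℝ := fun a => ∑ j ∈ Finset.univ.erase c', X a j * βh j with hA
    set B : ℝ := ∑ j ∈ Finset.univ.erase c, Real.exp (α * |βh ⟨k, j⟩|) with hB
    set Cst : ℝ := ∑ l ∈ Finset.univ.erase k, w l * Real.log (S l) with hCst
    have h1 : ∀ (t : ℝ) (a : Fin n),
        ∑ j : (Σ k : Fin K, Fin (p k)), X a j * Function.update βh c' t j
          = A a + X a c' * t := by
      intro t a
      rw [← Finset.add_sum_erase _ _ (Finset.mem_univ c'), Function.update_self, add_comm]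
      congr 1
      exact Finset.sum_congr rfl fun j hj => by
        rw [Function.update_of_ne (Finset.ne_of_mem_erase hj)]
    have h2 : ∀ t : ℝ,
        ∑ l : Fin K, w l * Real.log (∑ j : Fin (p l), Real.exp (α * |Function.update βh c' t ⟨l, j⟩|))
          = w k * Real.log (Real.exp (α * |t|) + B) + Cst := by
      intro t
      rw [← Finset.add_sum_erase _ _ (Finset.mem_univ k)]
      congr 1
      · congr 2
        rw [← Finset.add_sum_erase _ _ (Finset.mem_univ c)]
        congr 1
        · show Real.exp (α * |Function.update βh c' t c'|) = _
          rw [Function.update_self]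
        · exact Finset.sum_congr rfl fun j hj => by
            rw [Function.update_of_ne
              (show (⟨k, j⟩ : Σ k : Fin K, Fin (p k)) ≠ c' from
                fun h => (Finset.ne_of_mem_erase hj) (eq_of_heq (Sigma.mk.inj_iff.mp h).2))]
      · exact Finset.sum_congr rfl fun l hl => by
          rw [show (∑ j : Fin (p l), Real.exp (α * |Function.update βh c' t ⟨l, j⟩|)) = S l from ?_]
          rw [hSdef]
          exact Finset.sum_congr rfl fun j _ => by
            rw [Function.update_of_ne
              (show (⟨l, j⟩ : Σ k : Fin K, Fin (p k)) ≠ c' from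
                fun h => (Finset.ne_of_mem_erase hl) (congrArg Sigma.fst h))]
    have hupdate : ∀ t : ℝ, Qf (Function.update βh c' t)
        = (1/(2*(n:ℝ))) * ∑ a : Fin n, (y a - (A a + X a c' * t)) ^ 2
          + lam * (w k * Real.log (Real.exp (α * |t|) + B) + Cst) := by
      intro t
      rw [hQf]
      simp only
      rw [h2 t]
      congr 2
      exact Finset.sum_congr rfl fun a _ => by rw [h1 t a]
    set t₀ : ℝ := βh c' with ht₀
    set sg : ℝ := (SignType.sign (βh c') : ℝ) with hsg
    have hEpos : (0:ℝ) < Real.exp (α * |t₀|) + B := by positivity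
    have hSk_split : S k = Real.exp (α * |t₀|) + B := by
      rw [hSdef]
      exact (Finset.add_sum_erase _ _ (Finset.mem_univ c)).symm
    have hAr : ∀ a : Fin n, y a - (A a + X a c' * t₀) = r a := by
      intro a
      rw [hrdef]
      simp only
      rw [← h1 t₀ a, Function.update_eq_self]
    have hder : HasDerivAt (fun t : ℝ =>
        (1/(2*(n:ℝ))) * ∑ a : Fin n, (y a - (A a + X a c' * t)) ^ 2
          + lam * (w k * Real.log (Real.exp (α * |t|) + B) + Cst))
        ((1/(2*(n:ℝ))) * ∑ a : Fin n, (-2 * (X a c' * r a))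
          + lam * (w k * ((α * sg * Real.exp (α * |t₀|)) / S k))) t₀ := by
      have hsq : ∀ a : Fin n, HasDerivAt (fun t : ℝ => (y a - (A a + X a c' * t)) ^ 2)
          (-2 * (X a c' * r a)) t₀ := by
        intro a
        have h := ((hasDerivAt_const t₀ (y a)).fun_sub
          (((hasDerivAt_id t₀).const_mul (X a c')).const_add (A a))).fun_pow 2
        refine h.congr_deriv ?_
        rw [← hAr a]
        norm_num
        ring
      have hlogp : HasDerivAt (fun t : ℝ => Real.log (Real.exp (α * |t|) + B))
          ((α * sg * Real.exp (α * |t₀|)) / S k) t₀ := by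
        have h := ((((hasDerivAt_abs hc).const_mul α).exp).add_const B).log hEpos.ne'
        rw [hSk_split]
        convert h using 1
        ring
      exact ((HasDerivAt.fun_sum (fun a _ => hsq a)).const_mul _).fun_add
        (((hlogp.const_mul (w k)).add_const Cst).const_mul lam)
    have hloc : IsLocalMin (fun t : ℝ => Qf (Function.update βh c' t)) t₀ :=
      Filter.Eventually.of_forall (fun t => by
        show Qf (Function.update βh c' t₀) ≤ _
        rw [show Function.update βh c' t₀ = βh from Function.update_eq_self c' βh]
        exact hQ _)
    have hder' : HasDerivAt (fun t : ℝ => Qf (Function.update βh c' t))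
        ((1/(2*(n:ℝ))) * ∑ a : Fin n, (-2 * (X a c' * r a))
          + lam * (w k * ((α * sg * Real.exp (α * |t₀|)) / S k))) t₀ := by
      rw [show (fun t : ℝ => Qf (Function.update βh c' t)) = _ from funext hupdate]
      exact hder
    have h0 := hloc.hasDerivAt_eq_zero hder'
    rw [← Finset.mul_sum] at h0
    have hSk := (hSpos k).ne'
    field_simp at h0 ⊢
    linarith
  -- the two coordinates are nonzero
  have hb1 : βh ⟨k, i⟩ ≠ 0 := fun h => by rw [h, zero_mul] at hsign; exact lt_irrefl 0 hsign
  have hb2 : βh ⟨k, j⟩ ≠ 0 := fun h => by rw [h, mul_zero] at hsign; exact lt_irrefl 0 hsign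
  have e1 := stat i hb1
  have e2 := stat j hb2
  obtain ⟨s, hs_abs, hsgn1, hsgn2, hdiff⟩ :
      ∃ s : ℝ, |s| = 1 ∧ (SignType.sign (βh ⟨k, i⟩) : ℝ) = s ∧
        (SignType.sign (βh ⟨k, j⟩) : ℝ) = s ∧
        |βh ⟨k, i⟩| - |βh ⟨k, j⟩| = s * (βh ⟨k, i⟩ - βh ⟨k, j⟩) := by
    rcases lt_or_gt_of_ne hb1 with h1 | h1
    · have h2 : βh ⟨k, j⟩ < 0 := by nlinarith
      refine ⟨-1, by norm_num, ?_, ?_, ?_⟩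
      · rw [sign_neg h1]; norm_num
      · rw [sign_neg h2]; norm_num
      · rw [abs_of_neg h1, abs_of_neg h2]; ring
    · have h2 : 0 < βh ⟨k, j⟩ := by nlinarith
      refine ⟨1, by norm_num, ?_, ?_, ?_⟩
      · rw [sign_pos h1]; norm_num
      · rw [sign_pos h2]; norm_num
      · rw [abs_of_pos h1, abs_of_pos h2]; ring
  rw [hsgn1] at e1
  rw [hsgn2] at e2
  -- subtracted stationarity equation
  have hsub : lam * w k * α *
        (s * (Real.exp (α * |βh ⟨k, i⟩|) - Real.exp (α * |βh ⟨k, j⟩|))) / S k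
      = (1 / (n : ℝ)) * ∑ a : Fin n, (X a ⟨k, i⟩ - X a ⟨k, j⟩) * r a := by
    calc lam * w k * α * (s * (Real.exp (α * |βh ⟨k, i⟩|) - Real.exp (α * |βh ⟨k, j⟩|))) / S k
        = lam * w k * (α * s * Real.exp (α * |βh ⟨k, i⟩|)) / S k
          - lam * w k * (α * s * Real.exp (α * |βh ⟨k, j⟩|)) / S k := by ring
      _ = (1 / (n:ℝ)) * ∑ a : Fin n, X a ⟨k, i⟩ * r a
          - (1 / (n:ℝ)) * ∑ a : Fin n, X a ⟨k, j⟩ * r a := by rw [e1, e2]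
      _ = (1 / (n:ℝ)) * ∑ a : Fin n, (X a ⟨k, i⟩ - X a ⟨k, j⟩) * r a := by
          rw [← mul_sub, ← Finset.sum_sub_distrib]
          congr 1
          exact Finset.sum_congr rfl fun a _ => by ring
  -- lower bound on the exponential difference
  have hαb : α * |βh ⟨k, i⟩ - βh ⟨k, j⟩|
      ≤ |Real.exp (α * |βh ⟨k, i⟩|) - Real.exp (α * |βh ⟨k, j⟩|)| := by
    have h := abs_sub_le_abs_exp_sub_exp (x := α * |βh ⟨k, i⟩|) (y := α * |βh ⟨k, j⟩|)
      (mul_nonneg hα.le (abs_nonneg _)) (mul_nonneg hα.le (abs_nonneg _))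
    calc α * |βh ⟨k, i⟩ - βh ⟨k, j⟩| = abs (α * |βh ⟨k, i⟩| - α * |βh ⟨k, j⟩|) := by
          rw [← mul_sub, abs_mul, abs_of_pos hα, hdiff, abs_mul, hs_abs, one_mul]
      _ ≤ _ := h
  -- Cauchy–Schwarz
  have hCS : |∑ a : Fin n, (X a ⟨k, i⟩ - X a ⟨k, j⟩) * r a|
      ≤ Real.sqrt (∑ a : Fin n, (X a ⟨k, i⟩ - X a ⟨k, j⟩) ^ 2) *
        Real.sqrt (∑ a : Fin n, r a ^ 2) := by
    rw [← Real.sqrt_sq_eq_abs, ← Real.sqrt_mul (by positivity)]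
    exact Real.sqrt_le_sqrt (Finset.sum_mul_sq_le_sq_mul_sq _ _ _)
  have hDx : ∑ a : Fin n, (X a ⟨k, i⟩ - X a ⟨k, j⟩) ^ 2
      = 2 * (1 - ∑ a : Fin n, X a ⟨k, i⟩ * X a ⟨k, j⟩) := by
    have hexp : ∀ a ∈ Finset.univ, (X a ⟨k, i⟩ - X a ⟨k, j⟩) ^ 2
        = (X a ⟨k, i⟩ ^ 2 + X a ⟨k, j⟩ ^ 2) - 2 * (X a ⟨k, i⟩ * X a ⟨k, j⟩) :=
      fun a _ => by ring
    rw [Finset.sum_congr rfl hexp, Finset.sum_sub_distrib, Finset.sum_add_distrib,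
      hcol ⟨k, i⟩, hcol ⟨k, j⟩, ← Finset.mul_sum]
    ring
  -- value at zero
  have hQf0 : Qf (fun _ => 0) = (1/(2*(n:ℝ))) * ∑ a : Fin n, y a ^ 2
      + lam * ∑ l : Fin K, w l * Real.log (p l) := by
    rw [hQf]
    simp [Finset.sum_const, Finset.card_univ]
  have hQfβ : Qf βh = (1/(2*(n:ℝ))) * ∑ a : Fin n, r a ^ 2
      + lam * ∑ l : Fin K, w l * Real.log (S l) := by
    rw [hQf]
    simp only [hrdef, hSdef]
  have hpen_nonneg : 0 ≤ ∑ l : Fin K, w l * Real.log (S l) :=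
    Finset.sum_nonneg fun l _ => mul_nonneg (hw l).le (Real.log_nonneg (hS1 l))
  have hQβ0 := hQ (fun _ => 0)
  rw [hQfβ, hQf0] at hQβ0
  -- bound on the residual norm
  have hR2 : ∑ a : Fin n, r a ^ 2
      ≤ (∑ a : Fin n, y a ^ 2) + 2 * (n:ℝ) * lam * ∑ l : Fin K, w l * Real.log (p l) := by
    have h2 : (1/(2*(n:ℝ))) * ∑ a : Fin n, r a ^ 2
        ≤ (1/(2*(n:ℝ))) * ∑ a : Fin n, y a ^ 2 + lam * ∑ l : Fin K, w l * Real.log (p l) := by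
      nlinarith [mul_nonneg hlam.le hpen_nonneg]
    calc ∑ a : Fin n, r a ^ 2
        = 2*(n:ℝ) * ((1/(2*(n:ℝ))) * ∑ a : Fin n, r a ^ 2) := by field_simp
      _ ≤ 2*(n:ℝ) * ((1/(2*(n:ℝ))) * ∑ a : Fin n, y a ^ 2
            + lam * ∑ l : Fin K, w l * Real.log (p l)) :=
          mul_le_mul_of_nonneg_left h2 (by positivity)
      _ = (∑ a : Fin n, y a ^ 2) + 2 * (n:ℝ) * lam * ∑ l : Fin K, w l * Real.log (p l) := by
          field_simp
  -- bound on S k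
  have hSk_le : S k ≤ Real.exp ((∑ a : Fin n, y a ^ 2) / (2 * (n:ℝ) * lam * w k)
      + ∑ l : Fin K, (w l / w k) * Real.log (p l)) := by
    have hpen_k : w k * Real.log (S k) ≤ ∑ l : Fin K, w l * Real.log (S l) :=
      Finset.single_le_sum
        (f := fun l => w l * Real.log (S l))
        (fun l _ => mul_nonneg (hw l).le (Real.log_nonneg (hS1 l))) (Finset.mem_univ k)
    have h1 : lam * (w k * Real.log (S k))
        ≤ (1/(2*(n:ℝ))) * ∑ a : Fin n, y a ^ 2 + lam * ∑ l : Fin K, w l * Real.log (p l) := by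
      have hL0 : (0:ℝ) ≤ (1/(2*(n:ℝ))) * ∑ a : Fin n, r a ^ 2 := by positivity
      linarith [mul_le_mul_of_nonneg_left hpen_k hlam.le, hQβ0, hL0]
    have hsum : ∑ l : Fin K, (w l / w k) * Real.log ((p l : ℝ))
        = (∑ l : Fin K, w l * Real.log (p l)) / w k := by
      rw [Finset.sum_div]
      exact Finset.sum_congr rfl fun l _ => div_mul_eq_mul_div _ _ _
    have h2 : Real.log (S k) ≤ (∑ a : Fin n, y a ^ 2) / (2 * (n:ℝ) * lam * w k)
        + ∑ l : Fin K, (w l / w k) * Real.log (p l) := by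
      have hq : Real.log (S k) ≤ ((1/(2*(n:ℝ))) * ∑ a : Fin n, y a ^ 2
          + lam * ∑ l : Fin K, w l * Real.log (p l)) / (lam * w k) := by
        rw [le_div_iff₀ (mul_pos hlam (hw k))]
        nlinarith [h1]
      calc Real.log (S k) ≤ _ := hq
        _ = (∑ a : Fin n, y a ^ 2) / (2 * (n:ℝ) * lam * w k)
            + (∑ l : Fin K, w l * Real.log (p l)) / w k := by
          field_simp [hlam.ne', (hw k).ne', hn'.ne']
        _ = _ := by rw [hsum]
    calc S k = Real.exp (Real.log (S k)) := (Real.exp_log (hSpos k)).symm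
      _ ≤ _ := Real.exp_le_exp.2 h2
  -- main chain of inequalities
  have hchain : lam * w k * α * (α * |βh ⟨k, i⟩ - βh ⟨k, j⟩|) / S k
      ≤ (1/(n:ℝ)) * (Real.sqrt (2 * (1 - ∑ a : Fin n, X a ⟨k, i⟩ * X a ⟨k, j⟩)) *
        Real.sqrt ((∑ a : Fin n, y a ^ 2)
          + 2 * (n:ℝ) * lam * ∑ l : Fin K, w l * Real.log (p l))) := by
    calc lam * w k * α * (α * |βh ⟨k, i⟩ - βh ⟨k, j⟩|) / S k
        ≤ lam * w k * α * |Real.exp (α * |βh ⟨k, i⟩|) - Real.exp (α * |βh ⟨k, j⟩|)| / S k :=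
          (div_le_div_iff_of_pos_right (hSpos k)).2
            (mul_le_mul_of_nonneg_left hαb (mul_pos (mul_pos hlam (hw k)) hα).le)
      _ = |lam * w k * α *
            (s * (Real.exp (α * |βh ⟨k, i⟩|) - Real.exp (α * |βh ⟨k, j⟩|))) / S k| := by
          rw [abs_div, abs_of_pos (hSpos k)]
          congr 1
          rw [abs_mul (lam * w k * α), abs_mul s, hs_abs, one_mul,
            abs_of_pos (mul_pos (mul_pos hlam (hw k)) hα)]
      _ = |(1 / (n:ℝ)) * ∑ a : Fin n, (X a ⟨k, i⟩ - X a ⟨k, j⟩) * r a| := by rw [hsub]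
      _ = (1/(n:ℝ)) * |∑ a : Fin n, (X a ⟨k, i⟩ - X a ⟨k, j⟩) * r a| := by
          rw [abs_mul, abs_of_pos (one_div_pos.mpr hn')]
      _ ≤ (1/(n:ℝ)) * (Real.sqrt (∑ a : Fin n, (X a ⟨k, i⟩ - X a ⟨k, j⟩) ^ 2) *
            Real.sqrt (∑ a : Fin n, r a ^ 2)) :=
          mul_le_mul_of_nonneg_left hCS (by positivity)
      _ ≤ _ := by
          rw [hDx]
          exact mul_le_mul_of_nonneg_left
            (mul_le_mul_of_nonneg_left (Real.sqrt_le_sqrt hR2) (Real.sqrt_nonneg _))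
            (by positivity)
  -- finish
  have hfinal : |βh ⟨k, i⟩ - βh ⟨k, j⟩|
      ≤ (S k / (lam * w k * α ^ 2)) *
        ((1/(n:ℝ)) * (Real.sqrt (2 * (1 - ∑ a : Fin n, X a ⟨k, i⟩ * X a ⟨k, j⟩)) *
          Real.sqrt ((∑ a : Fin n, y a ^ 2)
            + 2 * (n:ℝ) * lam * ∑ l : Fin K, w l * Real.log (p l)))) := by
    have h := mul_le_mul_of_nonneg_left hchain
      (div_nonneg (hSpos k).le (mul_pos (mul_pos hlam (hw k)) (pow_pos hα 2)).le)
    calc |βh ⟨k, i⟩ - βh ⟨k, j⟩|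
        = (S k / (lam * w k * α ^ 2)) *
          (lam * w k * α * (α * |βh ⟨k, i⟩ - βh ⟨k, j⟩|) / S k) := by
          field_simp [hlam.ne', (hw k).ne', hα.ne', (hSpos k).ne']
      _ ≤ _ := h
  calc |βh ⟨k, i⟩ - βh ⟨k, j⟩| ≤ _ := hfinal
    _ = S k * ((1 / ((n:ℝ) * lam * α ^ 2 * w k)) *
          Real.sqrt ((∑ a : Fin n, y a ^ 2)
            + 2 * (n:ℝ) * lam * ∑ l : Fin K, w l * Real.log (p l)) *
          Real.sqrt (2 * (1 - ∑ a : Fin n, X a ⟨k, i⟩ * X a ⟨k, j⟩))) := by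
        rw [div_mul_eq_mul_div, div_mul_eq_mul_div]
        field_simp [hlam.ne', (hw k).ne', hα.ne', (hSpos k).ne', hn'.ne']
    _ ≤ Real.exp ((∑ a : Fin n, y a ^ 2) / (2 * (n:ℝ) * lam * w k)
          + ∑ l : Fin K, (w l / w k) * Real.log (p l)) *
        ((1 / ((n:ℝ) * lam * α ^ 2 * w k)) *
          Real.sqrt ((∑ a : Fin n, y a ^ 2)
            + 2 * (n:ℝ) * lam * ∑ l : Fin K, w l * Real.log (p l)) *
          Real.sqrt (2 * (1 - ∑ a : Fin n, X a ⟨k, i⟩ * X a ⟨k, j⟩))) :=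
        mul_le_mul_of_nonneg_right hSk_le
          (mul_nonneg (mul_nonneg
            (one_div_pos.mpr (mul_pos (mul_pos (mul_pos hn' hlam) (pow_pos hα 2)) (hw k))).le
            (Real.sqrt_nonneg _)) (Real.sqrt_nonneg _))
    _ = _ := by ring
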